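/- The pullback map φ* : H_n(ℂ³) → S_{2n}, defined by (φ*h)(u,v) = h((u²−v²)/2, (u²+v²)/(2i), uv), is a ℂ-linear isomorphism from the space of complex harmonic homogeneous polynomials of degree n in three variables onto the space of binary forms of degree 2n. -/

import Mathlib

open Complex MvPolynomial

/-- The Laplacian `Δ = ∂²_x + ∂²_y + ∂²_z` as a linear map on complex polynomials in
three variables. -/
noncomputable def lapL : MvPolynomial (Fin 3) ℂ →ₗ[ℂ] MvPolynomial (Fin 3) ℂ :=
  ∑ i : Fin 3, ((pderiv i).toLinearMap ∘ₗ (pderiv i).toLinearMap)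

/-- The space `H_n(ℂ³)` of complex harmonic homogeneous polynomials of degree `n` in three
variables. -/
noncomputable def harmonicPolySpace (n : ℕ) : Submodule ℂ (MvPolynomial (Fin 3) ℂ) :=
  MvPolynomial.homogeneousSubmodule (Fin 3) ℂ n ⊓ LinearMap.ker lapL

/-- The Cartan map in coordinates, `φ(u,v) = ((u²−v²)/2, (u²+v²)/(2i), uv)`. -/
noncomputable def cartanMapVec (ξ : Fin 2 → ℂ) : Fin 3 → ℂ :=
  ![(ξ 0 ^ 2 - ξ 1 ^ 2) / 2, (ξ 0 ^ 2 + ξ 1 ^ 2) / (2 * I), ξ 0 * ξ 1]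

namespace CartanAux

noncomputable def cartanPoly : Fin 3 → MvPolynomial (Fin 2) ℂ :=
  ![C (2 : ℂ)⁻¹ * (X 0 ^ 2 - X 1 ^ 2), C ((2 * I)⁻¹) * (X 0 ^ 2 + X 1 ^ 2), X 0 * X 1]

lemma eval_cartanPoly (ξ : Fin 2 → ℂ) (i : Fin 3) :
    eval ξ (cartanPoly i) = cartanMapVec ξ i := by
  fin_cases i <;> simp [cartanPoly, cartanMapVec, div_eq_mul_inv, mul_comm]

lemma eval_aeval_cartan (ξ : Fin 2 → ℂ) (h : MvPolynomial (Fin 3) ℂ) :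
    eval ξ (aeval cartanPoly h) = eval (cartanMapVec ξ) h := by
  rw [aeval_def, eval_eval₂]
  have hf : (eval ξ).comp (algebraMap ℂ (MvPolynomial (Fin 2) ℂ)) = RingHom.id ℂ :=
    RingHom.ext fun a => by simp [MvPolynomial.algebraMap_eq]
  have hg : (fun s => eval ξ (cartanPoly s)) = cartanMapVec ξ := funext (eval_cartanPoly ξ)
  rw [hf, hg, eval₂_id]

noncomputable def qPoly : MvPolynomial (Fin 3) ℂ := X 0 ^ 2 + X 1 ^ 2 + X 2 ^ 2

lemma qPoly_isHomogeneous : qPoly.IsHomogeneous 2 :=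
  ((isHomogeneous_X_pow _ _).add (isHomogeneous_X_pow _ _)).add (isHomogeneous_X_pow _ _)

lemma eval_cartan_qPoly (ξ : Fin 2 → ℂ) : eval (cartanMapVec ξ) qPoly = 0 := by
  have hI : (I : ℂ) ≠ 0 := I_ne_zero
  simp only [qPoly, cartanMapVec, map_add, map_pow, eval_X]
  show ((ξ 0 ^ 2 - ξ 1 ^ 2) / 2) ^ 2 + ((ξ 0 ^ 2 + ξ 1 ^ 2) / (2 * I)) ^ 2 + (ξ 0 * ξ 1) ^ 2 = 0
  field_simp
  ring_nf
  rw [Complex.I_sq]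
  ring

lemma aeval_cartan_qPoly : aeval cartanPoly qPoly = 0 := by
  apply MvPolynomial.funext (R := ℂ)
  intro x
  rw [eval_aeval_cartan, eval_cartan_qPoly, map_zero]

lemma qPoly_ne_zero : qPoly ≠ 0 := by
  intro h
  have := congrArg (eval (fun _ => (1 : ℂ))) h
  simp [qPoly] at this
  norm_num at this

end CartanAux

namespace CartanAux

lemma degree_fin3 (v : Fin 3 →₀ ℕ) : v.degree = ∑ i : Fin 3, v i :=
  Finset.sum_subset (Finset.subset_univ _)
    (fun i _ hi => Finsupp.notMem_support_iff.mp hi)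

lemma degree_single (i : Fin 3) : (Finsupp.single i 1).degree = 1 := by
  simp [Finsupp.degree_single]

lemma degree_add (a b : Fin 3 →₀ ℕ) : (a + b).degree = a.degree + b.degree := by
  simp [Finsupp.degree_eq_weight_one, map_add]

lemma sub_single_add {v : Fin 3 →₀ ℕ} {i : Fin 3} (h : v i ≠ 0) :
    v - Finsupp.single i 1 + Finsupp.single i 1 = v := by
  ext j
  by_cases hj : j = i
  · subst hj
    simp only [Finsupp.add_apply, Finsupp.tsub_apply, Finsupp.single_eq_same]
    omega
  · simp [Finsupp.single_apply, Ne.symm hj, hj]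

lemma X_mul_pderiv_monomial (v : Fin 3 →₀ ℕ) (c : ℂ) (i : Fin 3) :
    X i * pderiv i (monomial v c) = monomial v (c * v i) := by
  rw [pderiv_monomial]
  by_cases h : v i = 0
  · simp [h]
  · have h1 : X i * monomial (v - Finsupp.single i 1) (c * v i)
        = monomial (Finsupp.single i 1 + (v - Finsupp.single i 1)) (c * v i) := by
      rw [monomial_single_add, pow_one]
    rw [h1, add_comm, sub_single_add h]

lemma euler {n : ℕ} {p : MvPolynomial (Fin 3) ℂ} (hp : p.IsHomogeneous n) :
    ∑ i : Fin 3, X i * pderiv i p = (n : ℂ) • p := by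
  have step : ∀ i : Fin 3, X i * pderiv i p = ∑ v ∈ p.support, monomial v (coeff v p * v i) := by
    intro i
    conv_lhs => rw [p.as_sum]
    rw [map_sum, Finset.mul_sum]
    exact Finset.sum_congr rfl fun v _ => X_mul_pderiv_monomial v _ i
  calc ∑ i : Fin 3, X i * pderiv i p
      = ∑ i : Fin 3, ∑ v ∈ p.support, monomial v (coeff v p * v i) :=
        Finset.sum_congr rfl fun i _ => step i
    _ = ∑ v ∈ p.support, ∑ i : Fin 3, monomial v (coeff v p * v i) := Finset.sum_comm
    _ = (n : ℂ) • p := ?_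
  conv_rhs => rw [p.as_sum, Finset.smul_sum]
  refine Finset.sum_congr rfl fun v hv => ?_
  have hdeg : v.degree = n := by
    rw [Finsupp.degree_eq_weight_one]
    exact hp (mem_support_iff.mp hv)
  calc ∑ i : Fin 3, monomial v (coeff v p * v i)
      = monomial v (coeff v p * (∑ i : Fin 3, (v i : ℂ))) := by
        rw [← map_sum, ← Finset.mul_sum]
    _ = (n : ℂ) • monomial v (coeff v p) := by
        rw [smul_monomial, smul_eq_mul, ← Nat.cast_sum, ← degree_fin3, hdeg, mul_comm]

lemma isHomogeneous_pderiv {n : ℕ} {p : MvPolynomial (Fin 3) ℂ} (hp : p.IsHomogeneous n)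
    (i : Fin 3) : (pderiv i p).IsHomogeneous (n - 1) := by
  rw [p.as_sum, map_sum]
  refine IsHomogeneous.sum _ _ _ fun v hv => ?_
  rw [pderiv_monomial]
  by_cases h : v i = 0
  · simp [h, isHomogeneous_zero]
  · refine isHomogeneous_monomial _ ?_
    have hdeg : v.degree = n := by
      rw [Finsupp.degree_eq_weight_one]; exact hp (mem_support_iff.mp hv)
    have h2 : (v - Finsupp.single i 1).degree + 1 = n := by
      have := degree_add (v - Finsupp.single i 1) (Finsupp.single i 1)
      rw [sub_single_add h, degree_single] at this
      omega
    omega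

lemma lapL_apply (f : MvPolynomial (Fin 3) ℂ) :
    lapL f = ∑ i : Fin 3, pderiv i (pderiv i f) := by
  simp [lapL]

lemma isHomogeneous_lapL {n : ℕ} {p : MvPolynomial (Fin 3) ℂ} (hp : p.IsHomogeneous n) :
    (lapL p).IsHomogeneous (n - 2) := by
  rw [lapL_apply]
  refine IsHomogeneous.sum _ _ _ fun i _ => ?_
  have := isHomogeneous_pderiv (isHomogeneous_pderiv hp i) i
  rwa [Nat.sub_sub] at this

lemma pderiv_qPoly (i : Fin 3) : pderiv i qPoly = C 2 * X i := by
  fin_cases i <;>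
    simp [qPoly, pderiv_pow, pderiv_X_self, pderiv_X_of_ne, map_ofNat]

lemma lap_q_mul (f : MvPolynomial (Fin 3) ℂ) :
    lapL (qPoly * f) = qPoly * lapL f + 4 * (∑ i : Fin 3, X i * pderiv i f) + 6 * f := by
  simp only [lapL_apply, Fin.sum_univ_three, pderiv_mul, pderiv_qPoly, pderiv_C_mul,
    pderiv_X_self, pderiv_C, map_add, zero_mul, mul_zero, add_zero, zero_add]
  simp only [map_ofNat]
  ring

end CartanAux

namespace CartanAux

lemma lap_q_pow_mul {d : ℕ} {w : MvPolynomial (Fin 3) ℂ} (hw : w.IsHomogeneous d) (k : ℕ) :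
    lapL (qPoly ^ (k + 1) * w) =
      qPoly ^ (k + 1) * lapL w
        + ((2 * (k + 1) * (2 * d + 2 * k + 3) : ℕ) : MvPolynomial (Fin 3) ℂ) *
            (qPoly ^ k * w) := by
  induction k with
  | zero =>
      rw [pow_one, pow_zero, one_mul, lap_q_mul, euler hw, smul_eq_C_mul, map_natCast]
      push_cast
      ring
  | succ k IH =>
      have h1 : qPoly ^ (k + 1 + 1) * w = qPoly * (qPoly ^ (k + 1) * w) := by ring
      have hhom : (qPoly ^ (k + 1) * w).IsHomogeneous (2 * (k + 1) + d) :=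
        (qPoly_isHomogeneous.pow _).mul hw
      rw [h1, lap_q_mul, euler hhom, IH, smul_eq_C_mul, map_natCast]
      push_cast
      ring

lemma descent (d : ℕ) : ∀ w : MvPolynomial (Fin 3) ℂ, w.IsHomogeneous d →
    ∀ k : ℕ, lapL (qPoly ^ (k + 1) * w) = 0 → w = 0 := by
  induction d using Nat.strong_induction_on with
  | _ d IH =>
    intro w hw k hlap
    by_cases hw0 : w = 0
    · exact hw0
    exfalso
    set c : ℕ := 2 * (k + 1) * (2 * d + 2 * k + 3) with hc
    have hcc : (c : ℂ) ≠ 0 := Nat.cast_ne_zero.mpr (by positivity)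
    have heq := lap_q_pow_mul hw k
    rw [hlap] at heq
    have hfact : qPoly ^ k *
        (qPoly * lapL w + ((c : ℕ) : MvPolynomial (Fin 3) ℂ) * w) = 0 := by
      rw [← hc] at heq
      linear_combination -heq
    have h2 : qPoly * lapL w + ((c : ℕ) : MvPolynomial (Fin 3) ℂ) * w = 0 :=
      (mul_eq_zero.mp hfact).resolve_left (pow_ne_zero _ qPoly_ne_zero)
    set g : MvPolynomial (Fin 3) ℂ := C (-((c : ℂ)⁻¹)) * lapL w with hg
    have hqg : qPoly * g = w := by
      have h3 : qPoly * lapL w = -(C ((c : ℕ) : ℂ) * w) := by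
        rw [map_natCast]
        linear_combination h2
      rw [hg, mul_left_comm, h3, ← mul_neg, ← mul_assoc, ← map_mul, neg_mul,
        inv_mul_cancel₀ hcc, map_neg, map_one, neg_mul, one_mul, neg_neg]
    have hghom : g.IsHomogeneous (d - 2) := (isHomogeneous_lapL hw).C_mul _
    have hgne : g ≠ 0 := fun h => hw0 (by rw [← hqg, h, mul_zero])
    have hdeq : d = 2 + (d - 2) := by
      have h4 : w.IsHomogeneous (2 + (d - 2)) := hqg ▸ qPoly_isHomogeneous.mul hghom
      have := h4.inj_right hw hw0
      omega
    have hlt : d - 2 < d := by omega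
    refine hgne (IH (d - 2) hlt g hghom (k + 1) ?_)
    have : qPoly ^ (k + 1 + 1) * g = qPoly ^ (k + 1) * w := by
      rw [← hqg]; ring
    rw [this, hlap]

lemma homogeneousComponent_q_mul (g : MvPolynomial (Fin 3) ℂ) (d : ℕ) :
    homogeneousComponent (d + 2) (qPoly * g) = qPoly * homogeneousComponent d g := by
  conv_lhs => rw [g.as_sum, Finset.mul_sum, map_sum]
  conv_rhs => rw [g.as_sum, map_sum, Finset.mul_sum]
  refine Finset.sum_congr rfl fun v hv => ?_
  have hql : (qPoly * monomial v (coeff v g)) ∈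
      homogeneousSubmodule (Fin 3) ℂ (2 + v.degree) :=
    qPoly_isHomogeneous.mul (isHomogeneous_monomial _ rfl)
  have hm : (monomial v (coeff v g)) ∈ homogeneousSubmodule (Fin 3) ℂ v.degree :=
    isHomogeneous_monomial _ rfl
  rw [homogeneousComponent_of_mem hql, homogeneousComponent_of_mem hm]
  by_cases hvd : v.degree = d
  · rw [if_pos (by omega), if_pos hvd.symm]
  · rw [if_neg (by omega), if_neg (fun h => hvd h.symm), mul_zero]

lemma isHomogeneous_of_q_mul {g : MvPolynomial (Fin 3) ℂ} {n : ℕ}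
    (h : (qPoly * g).IsHomogeneous n) : g.IsHomogeneous (n - 2) := by
  have key : ∀ d : ℕ, d ≠ n - 2 → homogeneousComponent d g = 0 := by
    intro d hd
    have h1 : qPoly * homogeneousComponent d g = 0 := by
      rw [← homogeneousComponent_q_mul, homogeneousComponent_of_mem h, if_neg]
      by_cases h2 : 2 ≤ n
      · omega
      · intro h3
        have hle := h.totalDegree_le
        omega
    exact (mul_eq_zero.mp h1).resolve_left qPoly_ne_zero
  have hg : g = homogeneousComponent (n - 2) g := by
    conv_lhs => rw [← g.sum_homogeneousComponent]
    rw [Finset.sum_eq_single (n - 2)]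
    · intro b _ hb
      exact key b hb
    · intro hnot
      exact homogeneousComponent_eq_zero _ _ (by
        simp only [Finset.mem_range, not_lt] at hnot
        omega)
  rw [hg]
  exact homogeneousComponent_isHomogeneous _ _

lemma injective_step {n : ℕ} {h : MvPolynomial (Fin 3) ℂ} (hh : h.IsHomogeneous n)
    (hl : lapL h = 0) (hq : qPoly ∣ h) : h = 0 := by
  obtain ⟨g, rfl⟩ := hq
  have hg : g.IsHomogeneous (n - 2) := isHomogeneous_of_q_mul hh
  have hzero : g = 0 := descent (n - 2) g hg 0 (by rwa [pow_one])
  rw [hzero, mul_zero]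

end CartanAux

namespace CartanAux

lemma finSuccEquiv_X_one : finSuccEquiv ℂ 2 (X 1) = Polynomial.C (X 0) := by
  rw [show (1 : Fin 3) = Fin.succ 0 from rfl, finSuccEquiv_X_succ]

lemma finSuccEquiv_X_two : finSuccEquiv ℂ 2 (X 2) = Polynomial.C (X 1) := by
  rw [show (2 : Fin 3) = Fin.succ 1 from rfl, finSuccEquiv_X_succ]

lemma finSuccEquiv_rename_succ (p : MvPolynomial (Fin 2) ℂ) :
    finSuccEquiv ℂ 2 (rename Fin.succ p) = Polynomial.C p := by
  have h : ((finSuccEquiv ℂ 2).toAlgHom.comp (rename Fin.succ) :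
        MvPolynomial (Fin 2) ℂ →ₐ[ℂ] Polynomial (MvPolynomial (Fin 2) ℂ)) =
      Polynomial.CAlgHom := by
    apply MvPolynomial.algHom_ext
    intro j
    simp only [AlgHom.coe_comp, Function.comp_apply, AlgEquiv.toAlgHom_eq_coe,
      AlgHom.coe_coe, rename_X, finSuccEquiv_X_succ, Polynomial.CAlgHom]
    exact finSuccEquiv_X_succ
  have := DFunLike.congr_fun h p
  simpa [Polynomial.CAlgHom] using this

lemma exists_cartan_point (s t w : ℂ) (hw : w ^ 2 = -(s ^ 2 + t ^ 2)) :
    ∃ u v : ℂ, (u ^ 2 - v ^ 2) / 2 = w ∧ (u ^ 2 + v ^ 2) / (2 * I) = s ∧ u * v = t := by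
  obtain ⟨u, hu⟩ := IsAlgClosed.exists_pow_nat_eq (w + I * s) (n := 2) (by norm_num)
  obtain ⟨v0, hv0⟩ := IsAlgClosed.exists_pow_nat_eq (I * s - w) (n := 2) (by norm_num)
  have hI : (I : ℂ) ≠ 0 := I_ne_zero
  have hprod : (u * v0 - t) * (u * v0 + t) = 0 := by
    have : (u * v0) ^ 2 = t ^ 2 := by
      rw [mul_pow, hu, hv0]
      linear_combination (-1 : ℂ) * hw + s ^ 2 * Complex.I_sq
    linear_combination this
  rcases mul_eq_zero.mp hprod with h | h
  · refine ⟨u, v0, ?_, ?_, by linear_combination h⟩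
    · rw [hu, hv0]; ring
    · rw [hu, hv0]; field_simp; ring
  · refine ⟨u, -v0, ?_, ?_, by linear_combination -h⟩
    · rw [neg_pow, hu]; rw [show (-1:ℂ)^2 * v0^2 = v0^2 by ring, hv0]; ring
    · rw [neg_pow, hu]; rw [show (-1:ℂ)^2 * v0^2 = v0^2 by ring, hv0]
      field_simp; ring

lemma cartan_vec_succ (u v : ℂ) :
    (cartanMapVec ![u, v]) ∘ Fin.succ = ![(u ^ 2 + v ^ 2) / (2 * I), u * v] := by
  funext j
  fin_cases j <;> simp [cartanMapVec]

lemma q_dvd_of_eval_cartan_zero {h : MvPolynomial (Fin 3) ℂ}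
    (h0 : ∀ ξ : Fin 2 → ℂ, eval (cartanMapVec ξ) h = 0) : qPoly ∣ h := by
  classical
  set ε := finSuccEquiv ℂ 2 with hε
  set Q : Polynomial (MvPolynomial (Fin 2) ℂ) :=
    Polynomial.X ^ 2 + Polynomial.C (X 0 ^ 2 + X 1 ^ 2) with hQ
  have hQmonic : Q.Monic := Polynomial.monic_X_pow_add_C _ (by norm_num)
  have hεq : ε qPoly = Q := by
    rw [qPoly, hQ]
    rw [map_add, map_add, map_pow, map_pow, map_pow, finSuccEquiv_X_zero,
      finSuccEquiv_X_one, finSuccEquiv_X_two, ← Polynomial.C_pow, ← Polynomial.C_pow,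
      Polynomial.C_add]
    ring
  set r := ε h %ₘ Q with hr
  set g := ε h /ₘ Q with hgdef
  have hdecomp : ε h = Q * g + r := by
    rw [hr, hgdef]
    linear_combination (Polynomial.modByMonic_add_div (ε h) Q).symm
  have hQdeg : Q.degree = 2 := by
    rw [hQ]
    exact Polynomial.degree_X_pow_add_C (by norm_num) _
  have hrform : r = Polynomial.C (r.coeff 1) * Polynomial.X + Polynomial.C (r.coeff 0) := by
    by_cases h0r : r = 0
    · simp [h0r]
    · apply Polynomial.eq_X_add_C_of_natDegree_le_one
      have hlt : r.degree < 2 := hQdeg ▸ Polynomial.degree_modByMonic_lt _ hQmonic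
      have hnat : r.natDegree < 2 :=
        (Polynomial.natDegree_lt_iff_degree_lt (n := 2) h0r).mpr (by exact_mod_cast hlt)
      omega
  set A : MvPolynomial (Fin 3) ℂ := rename Fin.succ (r.coeff 0) with hA
  set B : MvPolynomial (Fin 3) ℂ := rename Fin.succ (r.coeff 1) with hB
  set G : MvPolynomial (Fin 3) ℂ := ε.symm g with hG
  have hstruct : h = qPoly * G + (X 0 * B + A) := by
    apply ε.injective
    rw [map_add, map_add, map_mul, map_mul, hεq, hG, AlgEquiv.apply_symm_apply,
      finSuccEquiv_X_zero, hA, hB, finSuccEquiv_rename_succ, finSuccEquiv_rename_succ,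
      hdecomp]
    conv_lhs => rw [hrform]
    ring
  -- pointwise consequence
  have key : ∀ u v : ℂ,
      eval ![(u ^ 2 + v ^ 2) / (2 * I), u * v] (r.coeff 0)
        + (u ^ 2 - v ^ 2) / 2 * eval ![(u ^ 2 + v ^ 2) / (2 * I), u * v] (r.coeff 1) = 0 := by
    intro u v
    have := h0 ![u, v]
    rw [hstruct] at this
    rw [map_add, map_add, map_mul, map_mul, eval_cartan_qPoly, zero_mul, zero_add] at this
    rw [hA, hB, eval_rename, eval_rename, cartan_vec_succ] at this
    have hx0 : eval (cartanMapVec ![u, v]) (X 0) = (u ^ 2 - v ^ 2) / 2 := by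
      simp [cartanMapVec]
    rw [hx0] at this
    linear_combination this
  have hswap : ∀ u v : ℂ, (![(v ^ 2 + u ^ 2) / (2 * I), v * u] : Fin 2 → ℂ)
      = ![(u ^ 2 + v ^ 2) / (2 * I), u * v] := by
    intro u v
    funext j
    fin_cases j <;> simp <;> ring
  have keyadd : ∀ u v : ℂ, eval ![(u ^ 2 + v ^ 2) / (2 * I), u * v] (r.coeff 0) = 0 := by
    intro u v
    have k1 := key u v
    have k2 := key v u
    rw [hswap] at k2
    linear_combination (k1 + k2) / 2
  have keysub : ∀ u v : ℂ,
      (u ^ 2 - v ^ 2) / 2 * eval ![(u ^ 2 + v ^ 2) / (2 * I), u * v] (r.coeff 1) = 0 := by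
    intro u v
    have k1 := key u v
    have k2 := key v u
    rw [hswap] at k2
    linear_combination (k1 - k2) / 2
  -- conclude r0 = 0
  have hr0zero : r.coeff 0 = 0 := by
    apply MvPolynomial.funext (R := ℂ)
    intro x
    rw [map_zero]
    obtain ⟨w, hw⟩ := IsAlgClosed.exists_pow_nat_eq (-(x 0 ^ 2 + x 1 ^ 2)) (n := 2) (by norm_num)
    obtain ⟨u, v, hc0, hc1, hc2⟩ := exists_cartan_point (x 0) (x 1) w hw
    have := keyadd u v
    rw [hc1, hc2] at this
    have hx : x = ![x 0, x 1] := by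
      funext j; fin_cases j <;> rfl
    rw [hx]
    exact this
  -- conclude r1 = 0
  have hr1zero : r.coeff 1 = 0 := by
    have hprod : (X 0 ^ 2 + X 1 ^ 2) * r.coeff 1 = 0 := by
      apply MvPolynomial.funext (R := ℂ)
      intro x
      rw [map_zero, map_mul]
      by_cases hst : x 0 ^ 2 + x 1 ^ 2 = 0
      · simp only [map_add, map_pow, eval_X]
        rw [hst, zero_mul]
      · obtain ⟨w, hw⟩ := IsAlgClosed.exists_pow_nat_eq (-(x 0 ^ 2 + x 1 ^ 2)) (n := 2)
          (by norm_num)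
        have hwne : w ≠ 0 := by
          intro hw0
          rw [hw0] at hw
          apply hst
          linear_combination hw
        obtain ⟨u, v, hc0, hc1, hc2⟩ := exists_cartan_point (x 0) (x 1) w hw
        have := keysub u v
        rw [hc1, hc2, hc0] at this
        have hev : eval ![x 0, x 1] (r.coeff 1) = 0 := by
          rcases mul_eq_zero.mp this with h | h
          · exact absurd h hwne
          · exact h
        have hx : x = ![x 0, x 1] := by
          funext j; fin_cases j <;> rfl
        rw [hx, hev, mul_zero]
    have hne : (X 0 ^ 2 + X 1 ^ 2 : MvPolynomial (Fin 2) ℂ) ≠ 0 := by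
      intro hcon
      have := congrArg (eval ![1, 0]) hcon
      simp at this
    exact (mul_eq_zero.mp hprod).resolve_left hne
  have hrzero : r = 0 := by
    rw [hrform, hr0zero, hr1zero]
    simp
  refine ⟨G, ?_⟩
  apply ε.injective
  rw [map_mul, hεq, hG, AlgEquiv.apply_symm_apply, hdecomp, hrzero, add_zero]

end CartanAux

namespace CartanAux

noncomputable def zeta : MvPolynomial (Fin 3) ℂ := X 0 + C I * X 1
noncomputable def eta : MvPolynomial (Fin 3) ℂ := X 0 - C I * X 1

lemma pderiv0_zeta : pderiv 0 zeta = 1 := by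
  simp [zeta, pderiv_X_self, pderiv_X_of_ne, pderiv_C_mul]
lemma pderiv1_zeta : pderiv 1 zeta = C I := by
  simp [zeta, pderiv_X_self, pderiv_X_of_ne (show (0:Fin 3) ≠ 1 by decide), pderiv_C_mul]
lemma pderiv2_zeta : pderiv 2 zeta = 0 := by
  simp [zeta, pderiv_X_of_ne (show (0:Fin 3) ≠ 2 by decide),
    pderiv_X_of_ne (show (1:Fin 3) ≠ 2 by decide), pderiv_C_mul]
lemma pderiv0_eta : pderiv 0 eta = 1 := by
  simp [eta, pderiv_X_self, pderiv_X_of_ne, pderiv_C_mul]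
lemma pderiv1_eta : pderiv 1 eta = -(C I) := by
  simp [eta, pderiv_X_self, pderiv_X_of_ne (show (0:Fin 3) ≠ 1 by decide), pderiv_C_mul]
lemma pderiv2_eta : pderiv 2 eta = 0 := by
  simp [eta, pderiv_X_of_ne (show (0:Fin 3) ≠ 2 by decide),
    pderiv_X_of_ne (show (1:Fin 3) ≠ 2 by decide), pderiv_C_mul]
lemma pderiv0_X2 : pderiv 0 (X 2 : MvPolynomial (Fin 3) ℂ) = 0 :=
  pderiv_X_of_ne (by decide)
lemma pderiv1_X2 : pderiv 1 (X 2 : MvPolynomial (Fin 3) ℂ) = 0 :=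
  pderiv_X_of_ne (by decide)
lemma pderiv2_X2 : pderiv 2 (X 2 : MvPolynomial (Fin 3) ℂ) = 1 :=
  pderiv_X_self 2

lemma pderiv_natCast (i : Fin 3) (m : ℕ) :
    pderiv i ((m : MvPolynomial (Fin 3) ℂ)) = 0 := by
  rw [← map_natCast (C : ℂ →+* MvPolynomial (Fin 3) ℂ) m, pderiv_C]

lemma lap_triple (a b c : ℕ) :
    lapL (zeta ^ a * eta ^ b * X 2 ^ c) =
      (4 * a * b : MvPolynomial (Fin 3) ℂ) * (zeta ^ (a - 1) * eta ^ (b - 1) * X 2 ^ c)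
      + ((c : MvPolynomial (Fin 3) ℂ) * ((c - 1 : ℕ) : MvPolynomial (Fin 3) ℂ)) *
          (zeta ^ a * eta ^ b * X 2 ^ (c - 2)) := by
  have hI2 : (C I : MvPolynomial (Fin 3) ℂ) * C I = -1 := by
    rw [← map_mul, Complex.I_mul_I, map_neg, map_one]
  simp only [lapL_apply, Fin.sum_univ_three, pderiv_mul, pderiv_pow,
    pderiv0_zeta, pderiv1_zeta, pderiv2_zeta, pderiv0_eta, pderiv1_eta, pderiv2_eta,
    pderiv0_X2, pderiv1_X2, pderiv2_X2, pderiv_natCast, pderiv_C_mul,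
    mul_zero, zero_mul, mul_one, add_zero, zero_add, mul_neg, neg_mul, neg_neg,
    Nat.sub_sub]
  norm_num
  simp only [pderiv0_zeta, pderiv1_zeta, pderiv0_eta, pderiv1_eta, pderiv2_zeta, pderiv2_eta,
    mul_one, mul_neg, neg_neg, mul_zero, zero_mul, add_zero, zero_add]
  linear_combination ((a : MvPolynomial (Fin 3) ℂ) * ((a - 1 : ℕ) : MvPolynomial (Fin 3) ℂ)
        * zeta ^ (a - 1 - 1) * eta ^ b * X 2 ^ c
      + (b : MvPolynomial (Fin 3) ℂ) * ((b - 1 : ℕ) : MvPolynomial (Fin 3) ℂ)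
        * zeta ^ a * eta ^ (b - 1 - 1) * X 2 ^ c
      - 2 * (a : MvPolynomial (Fin 3) ℂ) * (b : MvPolynomial (Fin 3) ℂ)
        * zeta ^ (a - 1) * eta ^ (b - 1) * X 2 ^ c) * hI2

end CartanAux

namespace CartanAux

noncomputable def rcoef (A₀ B₀ K : ℕ) : ℕ → ℝ
  | 0 => 1
  | j + 1 => rcoef A₀ B₀ K j * ((K - 2 * j) * (K - 2 * j - 1) : ℕ) /
      (4 * (A₀ + j + 1) * (B₀ + j + 1))

lemma rcoef_nonneg (A₀ B₀ K : ℕ) : ∀ j, 0 ≤ rcoef A₀ B₀ K j := by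
  intro j
  induction j with
  | zero => norm_num [rcoef]
  | succ j IH =>
      rw [rcoef]
      positivity

lemma rcoef_zero (A₀ B₀ K : ℕ) : ∀ j, K < 2 * j → rcoef A₀ B₀ K j = 0 := by
  intro j
  induction j with
  | zero => omega
  | succ j IH =>
      intro hj
      rw [rcoef]
      by_cases h : K < 2 * j
      · rw [IH h, zero_mul, zero_div]
      · have : (K - 2 * j) * (K - 2 * j - 1) = 0 := by
          rcases (by omega : K - 2 * j = 0 ∨ K - 2 * j - 1 = 0) with h2 | h2 <;> simp [h2]
        rw [this]
        norm_num

noncomputable def ccoef (A₀ B₀ K : ℕ) (j : ℕ) : ℂ := (-1) ^ j * ((rcoef A₀ B₀ K j : ℝ) : ℂ)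

lemma rcoef_rec (A₀ B₀ K j : ℕ) :
    rcoef A₀ B₀ K (j + 1) * (4 * (A₀ + j + 1) * (B₀ + j + 1) : ℝ) =
      rcoef A₀ B₀ K j * ((K - 2 * j) * (K - 2 * j - 1) : ℕ) := by
  rw [rcoef]
  rw [div_mul_cancel₀]
  positivity

lemma ccoef_rec (A₀ B₀ K j : ℕ) :
    ccoef A₀ B₀ K (j + 1) * (4 * ((A₀ + j + 1 : ℕ) : ℂ) * ((B₀ + j + 1 : ℕ) : ℂ))
      = -(ccoef A₀ B₀ K j * (((K - 2 * j : ℕ) : ℂ) * ((K - 2 * j - 1 : ℕ) : ℂ))) := by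
  have h := rcoef_rec A₀ B₀ K j
  have h2 : ((rcoef A₀ B₀ K (j + 1) : ℝ) : ℂ)
        * (4 * ((A₀ + j + 1 : ℕ) : ℂ) * ((B₀ + j + 1 : ℕ) : ℂ))
      = ((rcoef A₀ B₀ K j : ℝ) : ℂ)
        * (((K - 2 * j : ℕ) : ℂ) * ((K - 2 * j - 1 : ℕ) : ℂ)) := by
    have := congrArg (fun x : ℝ => (x : ℂ)) h
    push_cast at this ⊢
    linear_combination this
  rw [ccoef, ccoef]
  linear_combination ((-1 : ℂ) ^ (j + 1)) * h2

lemma ccoef_zero (A₀ B₀ K j : ℕ) (h : K < 2 * j) : ccoef A₀ B₀ K j = 0 := by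
  rw [ccoef, rcoef_zero A₀ B₀ K j h]
  simp

end CartanAux

namespace CartanAux

noncomputable def hPoly (A₀ B₀ K : ℕ) : MvPolynomial (Fin 3) ℂ :=
  ∑ j ∈ Finset.range (K / 2 + 1),
    C (ccoef A₀ B₀ K j) * (zeta ^ (A₀ + j) * eta ^ (B₀ + j) * X 2 ^ (K - 2 * j))

lemma zeta_isHomogeneous : zeta.IsHomogeneous 1 :=
  (isHomogeneous_X _ _).add ((isHomogeneous_X _ _).C_mul _)

lemma eta_isHomogeneous : eta.IsHomogeneous 1 :=
  (isHomogeneous_X _ _).sub ((isHomogeneous_X _ _).C_mul _)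

lemma hPoly_isHomogeneous (A₀ B₀ K : ℕ) : (hPoly A₀ B₀ K).IsHomogeneous (A₀ + B₀ + K) := by
  refine IsHomogeneous.sum _ _ _ fun j hj => ?_
  have hjK : 2 * j ≤ K := by
    have := Finset.mem_range.mp hj
    omega
  have hz := zeta_isHomogeneous.pow (A₀ + j)
  have he := eta_isHomogeneous.pow (B₀ + j)
  rw [one_mul] at hz he
  have h1 := (hz.mul he).mul (isHomogeneous_X_pow (R := ℂ) 2 (K - 2 * j))
  rw [show A₀ + j + (B₀ + j) + (K - 2 * j) = A₀ + B₀ + K by omega] at h1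
  exact h1.C_mul _

lemma lapL_C_mul (a : ℂ) (f : MvPolynomial (Fin 3) ℂ) : lapL (C a * f) = C a * lapL f := by
  rw [← smul_eq_C_mul, ← smul_eq_C_mul, map_smul]

lemma hPoly_harmonic (A₀ B₀ K : ℕ) (hz : A₀ * B₀ = 0) : lapL (hPoly A₀ B₀ K) = 0 := by
  set P : ℕ → MvPolynomial (Fin 3) ℂ := fun j =>
    C (ccoef A₀ B₀ K j * (4 * ((A₀ + j : ℕ) : ℂ) * ((B₀ + j : ℕ) : ℂ))) *
      (zeta ^ (A₀ + j - 1) * eta ^ (B₀ + j - 1) * X 2 ^ (K - 2 * j)) with hP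
  have hterm : ∀ j : ℕ, lapL (C (ccoef A₀ B₀ K j)
      * (zeta ^ (A₀ + j) * eta ^ (B₀ + j) * X 2 ^ (K - 2 * j))) = P j - P (j + 1) := by
    intro j
    rw [lapL_C_mul, lap_triple]
    rw [hP]
    simp only []
    have e1 : A₀ + (j + 1) - 1 = A₀ + j := by omega
    have e2 : B₀ + (j + 1) - 1 = B₀ + j := by omega
    have e3 : K - 2 * (j + 1) = K - 2 * j - 2 := by omega
    rw [e1, e2, e3]
    have hC : (C (ccoef A₀ B₀ K (j + 1)
          * (4 * ((A₀ + j + 1 : ℕ) : ℂ) * ((B₀ + j + 1 : ℕ) : ℂ))) : MvPolynomial (Fin 3) ℂ)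
        = C (-(ccoef A₀ B₀ K j * (((K - 2 * j : ℕ) : ℂ) * ((K - 2 * j - 1 : ℕ) : ℂ)))) :=
      congrArg (fun z : ℂ => (C z : MvPolynomial (Fin 3) ℂ)) (ccoef_rec A₀ B₀ K j)
    simp only [map_neg, map_mul, map_natCast, map_ofNat] at hC
    rw [show A₀ + (j + 1) = A₀ + j + 1 by omega, show B₀ + (j + 1) = B₀ + j + 1 by omega]
    simp only [map_mul, map_natCast, map_ofNat]
    linear_combination (zeta ^ (A₀ + j) * eta ^ (B₀ + j) * X 2 ^ (K - 2 * j - 2)) * hC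
  rw [hPoly, map_sum]
  rw [Finset.sum_congr rfl fun j _ => hterm j]
  rw [Finset.sum_range_sub' P]
  have hP0 : P 0 = 0 := by
    rcases Nat.mul_eq_zero.mp hz with h | h <;> simp [hP, h]
  have hPend : P (K / 2 + 1) = 0 := by
    simp [hP, ccoef_zero A₀ B₀ K (K / 2 + 1) (by omega)]
  rw [hP0, hPend, sub_zero]

end CartanAux

namespace CartanAux

lemma aeval_cartan_zeta : aeval cartanPoly zeta = (X 0 : MvPolynomial (Fin 2) ℂ) ^ 2 := by
  have hC : ((C (2 : ℂ)⁻¹ * 2 : MvPolynomial (Fin 2) ℂ)) = 1 := by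
    rw [← map_ofNat (C : ℂ →+* MvPolynomial (Fin 2) ℂ) 2, ← map_mul]
    norm_num
  have hconst : (I : ℂ) * (2 * I)⁻¹ = 2⁻¹ := by
    rw [mul_inv, ← mul_assoc, mul_comm I, mul_assoc, mul_inv_cancel₀ I_ne_zero, mul_one]
  simp only [zeta, map_add, map_mul, aeval_X, aeval_C, algebraMap_eq]
  show C (2:ℂ)⁻¹ * (X 0 ^ 2 - X 1 ^ 2) + C I * (C ((2 * I))⁻¹ * (X 0 ^ 2 + X 1 ^ 2)) = X 0 ^ 2
  rw [← mul_assoc, ← map_mul, hconst]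
  linear_combination (X 0 ^ 2 : MvPolynomial (Fin 2) ℂ) * hC
lemma aeval_cartan_eta : aeval cartanPoly eta = -((X 1 : MvPolynomial (Fin 2) ℂ) ^ 2) := by
  have hC : ((C (2 : ℂ)⁻¹ * 2 : MvPolynomial (Fin 2) ℂ)) = 1 := by
    rw [← map_ofNat (C : ℂ →+* MvPolynomial (Fin 2) ℂ) 2, ← map_mul]
    norm_num
  have hconst : (I : ℂ) * (2 * I)⁻¹ = 2⁻¹ := by
    rw [mul_inv, ← mul_assoc, mul_comm I, mul_assoc, mul_inv_cancel₀ I_ne_zero, mul_one]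
  simp only [eta, map_sub, map_mul, aeval_X, aeval_C, algebraMap_eq]
  show C (2:ℂ)⁻¹ * (X 0 ^ 2 - X 1 ^ 2) - C I * (C ((2 * I))⁻¹ * (X 0 ^ 2 + X 1 ^ 2))
      = -(X 1 ^ 2)
  rw [← mul_assoc, ← map_mul, hconst]
  linear_combination (-(X 1 ^ 2) : MvPolynomial (Fin 2) ℂ) * hC
lemma aeval_cartan_X2 : aeval cartanPoly (X 2 : MvPolynomial (Fin 3) ℂ)
    = (X 0 * X 1 : MvPolynomial (Fin 2) ℂ) := by
  simp [cartanPoly]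

lemma aeval_term (A₀ B₀ K j : ℕ) (hj : 2 * j ≤ K) :
    aeval cartanPoly (zeta ^ (A₀ + j) * eta ^ (B₀ + j) * X 2 ^ (K - 2 * j)) =
      C ((-1 : ℂ) ^ (B₀ + j)) * (X 0 ^ (2 * A₀ + K) * X 1 ^ (2 * B₀ + K)) := by
  rw [map_mul, map_mul, map_pow, map_pow, map_pow, aeval_cartan_zeta, aeval_cartan_eta,
    aeval_cartan_X2]
  have hCneg : (C ((-1 : ℂ) ^ (B₀ + j)) : MvPolynomial (Fin 2) ℂ) = (-1) ^ (B₀ + j) := by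
    rw [map_pow, map_neg, map_one]
  rw [hCneg, neg_pow, mul_pow]
  rw [← pow_mul, ← pow_mul, mul_comm ((X 0 : MvPolynomial (Fin 2) ℂ) ^ (2 * (A₀ + j)))]
  rw [show ((-1 : MvPolynomial (Fin 2) ℂ) ^ (B₀ + j) * (X 1 ^ (2 * (B₀ + j)))
        * (X 0 ^ (2 * (A₀ + j))) * (X 0 ^ (K - 2 * j) * X 1 ^ (K - 2 * j)))
      = (-1) ^ (B₀ + j) * ((X 0 ^ (2 * (A₀ + j)) * X 0 ^ (K - 2 * j))
        * (X 1 ^ (2 * (B₀ + j)) * X 1 ^ (K - 2 * j))) by ring]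
  rw [← pow_add, ← pow_add, show 2 * (A₀ + j) + (K - 2 * j) = 2 * A₀ + K by omega,
    show 2 * (B₀ + j) + (K - 2 * j) = 2 * B₀ + K by omega]

noncomputable def lamC (A₀ B₀ K : ℕ) : ℂ :=
  ∑ j ∈ Finset.range (K / 2 + 1), ccoef A₀ B₀ K j * (-1 : ℂ) ^ (B₀ + j)

lemma lamC_ne_zero (A₀ B₀ K : ℕ) : lamC A₀ B₀ K ≠ 0 := by
  have hsum : lamC A₀ B₀ K
      = (-1 : ℂ) ^ B₀ * ((∑ j ∈ Finset.range (K / 2 + 1), rcoef A₀ B₀ K j : ℝ) : ℂ) := by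
    rw [lamC, Complex.ofReal_sum, Finset.mul_sum]
    refine Finset.sum_congr rfl fun j _ => ?_
    rw [ccoef, pow_add]
    have : ((-1 : ℂ) ^ j) ^ 2 = 1 := by
      rw [← pow_mul, mul_comm, pow_mul]
      norm_num
    ring_nf
    rw [show (-1 : ℂ) ^ (j * 2) = ((-1 : ℂ) ^ j) ^ 2 by rw [← pow_mul, mul_comm], this]
    ring
  have hsumpos : (0 : ℝ) < ∑ j ∈ Finset.range (K / 2 + 1), rcoef A₀ B₀ K j := by
    have h0 : (1 : ℝ) ≤ ∑ j ∈ Finset.range (K / 2 + 1), rcoef A₀ B₀ K j := by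
      have := Finset.single_le_sum (f := rcoef A₀ B₀ K)
        (fun i _ => rcoef_nonneg A₀ B₀ K i) (Finset.mem_range.mpr (by omega : 0 < K / 2 + 1))
      simpa [rcoef] using this
    linarith
  rw [hsum]
  exact mul_ne_zero (pow_ne_zero _ (by norm_num)) (by exact_mod_cast ne_of_gt hsumpos)

lemma aeval_cartan_hPoly (A₀ B₀ K : ℕ) :
    aeval cartanPoly (hPoly A₀ B₀ K)
      = C (lamC A₀ B₀ K) * (X 0 ^ (2 * A₀ + K) * X 1 ^ (2 * B₀ + K)) := by
  rw [hPoly, map_sum]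
  have hterm : ∀ j ∈ Finset.range (K / 2 + 1),
      aeval cartanPoly (C (ccoef A₀ B₀ K j)
        * (zeta ^ (A₀ + j) * eta ^ (B₀ + j) * X 2 ^ (K - 2 * j)))
      = (ccoef A₀ B₀ K j * (-1 : ℂ) ^ (B₀ + j))
          • ((X 0 : MvPolynomial (Fin 2) ℂ) ^ (2 * A₀ + K) * X 1 ^ (2 * B₀ + K)) := by
    intro j hj
    have hjK : 2 * j ≤ K := by
      have := Finset.mem_range.mp hj
      omega
    rw [map_mul, aeval_C, algebraMap_eq, aeval_term A₀ B₀ K j hjK, ← mul_assoc, ← map_mul,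
      smul_eq_C_mul]
  rw [Finset.sum_congr rfl hterm, ← Finset.sum_smul, lamC, smul_eq_C_mul]

end CartanAux

namespace CartanAux

lemma mem_harmonic_iff {n : ℕ} {p : MvPolynomial (Fin 3) ℂ} :
    p ∈ harmonicPolySpace n ↔ p.IsHomogeneous n ∧ lapL p = 0 := by
  rw [harmonicPolySpace, Submodule.mem_inf, mem_homogeneousSubmodule, LinearMap.mem_ker]

lemma exists_harmonic_preimage (A₀ B₀ K : ℕ) (hz : A₀ = 0 ∨ B₀ = 0) :
    ∃ (hP : MvPolynomial (Fin 3) ℂ) (lam : ℂ), lam ≠ 0 ∧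
      hP ∈ harmonicPolySpace (A₀ + B₀ + K) ∧
      aeval cartanPoly hP = C lam * (X 0 ^ (2 * A₀ + K) * X 1 ^ (2 * B₀ + K)) := by
  refine ⟨hPoly A₀ B₀ K, lamC A₀ B₀ K, lamC_ne_zero _ _ _, ?_, aeval_cartan_hPoly _ _ _⟩
  rw [mem_harmonic_iff]
  exact ⟨hPoly_isHomogeneous _ _ _, hPoly_harmonic _ _ _ (by rcases hz with h | h <;> simp [h])⟩

lemma degree_fin2 (v : Fin 2 →₀ ℕ) : v.degree = v 0 + v 1 := by
  have : v.degree = ∑ i : Fin 2, v i :=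
    Finset.sum_subset (Finset.subset_univ _) fun i _ hi => Finsupp.notMem_support_iff.mp hi
  rw [this, Fin.sum_univ_two]

lemma monomial_eq_fin2 (v : Fin 2 →₀ ℕ) (c : ℂ) :
    monomial v c = C c * (X 0 ^ (v 0) * X 1 ^ (v 1)) := by
  rw [monomial_eq]
  congr 1
  rw [Finsupp.prod_fintype _ _ (fun i => pow_zero _), Fin.prod_univ_two]

lemma surj_step {n : ℕ} (p : MvPolynomial (Fin 2) ℂ) (hp : p.IsHomogeneous (2 * n)) :
    ∃ h ∈ harmonicPolySpace n, aeval cartanPoly h = p := by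
  have hmem : ∀ v ∈ p.support, (monomial v (coeff v p)) ∈
      Submodule.map ((aeval cartanPoly).toLinearMap :
        MvPolynomial (Fin 3) ℂ →ₗ[ℂ] MvPolynomial (Fin 2) ℂ) (harmonicPolySpace n) := by
    intro v hv
    have hdeg : v 0 + v 1 = 2 * n := by
      rw [← degree_fin2, Finsupp.degree_eq_weight_one]
      exact hp (mem_support_iff.mp hv)
    obtain ⟨A₀, B₀, K, h1, h2, h3⟩ :
        ∃ A₀ B₀ K : ℕ, 2 * A₀ + K = v 0 ∧ 2 * B₀ + K = v 1 ∧ (A₀ = 0 ∨ B₀ = 0) := by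
      rcases le_total (v 0) (v 1) with h | h
      · exact ⟨0, (v 1 - v 0) / 2, v 0, by omega, by omega, Or.inl rfl⟩
      · exact ⟨(v 0 - v 1) / 2, 0, v 1, by omega, by omega, Or.inr rfl⟩
    obtain ⟨hP, lam, hlam, hmem, heq⟩ := exists_harmonic_preimage A₀ B₀ K h3
    have hn : A₀ + B₀ + K = n := by omega
    rw [hn] at hmem
    refine ⟨(coeff v p / lam) • hP, Submodule.smul_mem _ _ hmem, ?_⟩
    rw [map_smul, AlgHom.toLinearMap_apply, heq, monomial_eq_fin2, h1, h2]
    rw [smul_eq_C_mul, ← mul_assoc, ← map_mul, div_mul_cancel₀ _ hlam]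
  have : p ∈ Submodule.map ((aeval cartanPoly).toLinearMap :
      MvPolynomial (Fin 3) ℂ →ₗ[ℂ] MvPolynomial (Fin 2) ℂ) (harmonicPolySpace n) := by
    nth_rewrite 1 [p.as_sum]
    exact Submodule.sum_mem _ hmem
  obtain ⟨h, hh, heq⟩ := this
  exact ⟨h, hh, heq⟩

lemma cartanPoly_isHomogeneous (i : Fin 3) : (cartanPoly i).IsHomogeneous 2 := by
  fin_cases i
  · exact ((isHomogeneous_X_pow _ _).sub (isHomogeneous_X_pow _ _)).C_mul _
  · exact ((isHomogeneous_X_pow _ _).add (isHomogeneous_X_pow _ _)).C_mul _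
  · exact (isHomogeneous_X _ _).mul (isHomogeneous_X _ _)

noncomputable def PhiLin (n : ℕ) :
    harmonicPolySpace n →ₗ[ℂ] homogeneousSubmodule (Fin 2) ℂ (2 * n) :=
  LinearMap.codRestrict _
    (((aeval cartanPoly).toLinearMap :
        MvPolynomial (Fin 3) ℂ →ₗ[ℂ] MvPolynomial (Fin 2) ℂ).comp
      (harmonicPolySpace n).subtype)
    (fun x => by
      rw [mem_homogeneousSubmodule]
      have hx : (x : MvPolynomial (Fin 3) ℂ).IsHomogeneous n :=
        (mem_harmonic_iff.mp x.2).1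
      exact hx.aeval cartanPoly cartanPoly_isHomogeneous)

lemma PhiLin_bijective (n : ℕ) : Function.Bijective (PhiLin n) := by
  constructor
  · intro x y hxy
    have hsub : aeval cartanPoly
        ((x : MvPolynomial (Fin 3) ℂ) - (y : MvPolynomial (Fin 3) ℂ)) = 0 := by
      rw [map_sub, sub_eq_zero]
      exact congrArg (Subtype.val) hxy
    have hd : (x - y : harmonicPolySpace n) = (0 : harmonicPolySpace n) := by
      apply Subtype.ext
      have hmem := (x - y : harmonicPolySpace n).2
      rw [mem_harmonic_iff] at hmem
      have hxy' : ((x - y : harmonicPolySpace n) : MvPolynomial (Fin 3) ℂ)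
          = (x : MvPolynomial (Fin 3) ℂ) - y := rfl
      rw [hxy']
      refine injective_step hmem.1 ?_ ?_
      · rw [← hxy']; exact hmem.2
      · apply q_dvd_of_eval_cartan_zero
        intro ξ
        rw [← eval_aeval_cartan, hsub, map_zero]
    exact sub_eq_zero.mp hd
  · rintro ⟨y, hy⟩
    rw [mem_homogeneousSubmodule] at hy
    obtain ⟨h, hmem, heq⟩ := surj_step y hy
    exact ⟨⟨h, hmem⟩, Subtype.ext heq⟩

end CartanAux

open CartanAux in
theorem cartan_pullback_equiv (n : ℕ) :
    ∃ e : harmonicPolySpace n ≃ₗ[ℂ] MvPolynomial.homogeneousSubmodule (Fin 2) ℂ (2 * n),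
      ∀ (h : harmonicPolySpace n) (ξ : Fin 2 → ℂ),
        MvPolynomial.eval ξ ((e h : MvPolynomial (Fin 2) ℂ)) =
          MvPolynomial.eval (cartanMapVec ξ) (h : MvPolynomial (Fin 3) ℂ) := by
  refine ⟨LinearEquiv.ofBijective _ (PhiLin_bijective n), ?_⟩
  intro h ξ
  have : ((LinearEquiv.ofBijective _ (PhiLin_bijective n) h : _) : MvPolynomial (Fin 2) ℂ)
      = aeval cartanPoly (h : MvPolynomial (Fin 3) ℂ) := rfl
  rw [this, eval_aeval_cartan]
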